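/- Let d ∈ (0,1), let F ∈ SR_d^2(0+), let t₀ ∈ ℝ and let s ≤ 0. Then for every ε ∈ (0,d), C_F^{d,s}(t₀) ⊆ C^{d−s−ε}(t₀); that is, every continuous function in the 2-microlocal space with gauge F of parameters (d,s) at t₀ belongs to the pointwise Hölder space of order d − s − ε at t₀. -/

import Mathlib

open Set Filter MeasureTheory intervalIntegral Polynomial Metric
open scoped Topology

noncomputable section

/-- Mixed partial derivative `F^{(n,m)}`: `n` derivatives in the first (time) variable
and `m` derivatives in the second variable. -/
noncomputable def pderiv2 (n m : ℕ) (F : ℝ → ℝ → ℝ) : ℝ → ℝ → ℝ :=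
  fun s r => iteratedDeriv m (fun r' => iteratedDeriv n (fun s' => F s' r') s) r

/-- The closed half-plane `E = {(s,r) : r ≤ s}`. -/
def Ebar : Set (ℝ × ℝ) := {p | p.2 ≤ p.1}

/-- The open half-plane `Ẽ = {(s,r) : r < s}`. -/
def Etil : Set (ℝ × ℝ) := {p | p.2 < p.1}

/-- Membership in `C₊^{(k)}(E)` : continuous on `E`, `k` times continuously
differentiable on `Ẽ`, and strictly positive on `Ẽ`. -/
structure CPlus (k : ℕ) (F : ℝ → ℝ → ℝ) : Prop where
  cont : ContinuousOn (fun p : ℝ × ℝ => F p.1 p.2) Ebar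
  smooth : ContDiffOn ℝ k (fun p : ℝ × ℝ => F p.1 p.2) Etil
  pos : ∀ p ∈ Etil, 0 < F p.1 p.2

/-- `F` is a function of smooth variation of index `(ρ, k)` at the diagonal,
i.e. `F ∈ SR_ρ^k(0+)`. -/
structure SmoothVariation (ρ : ℝ) (k : ℕ) (F : ℝ → ℝ → ℝ) : Prop where
  mem : CPlus k F
  condA : ∀ K : Set ℝ, IsCompact K → ∀ ε > 0, ∃ h₀ > 0, ∀ h : ℝ, 0 < h → h < h₀ →
    ∀ t ∈ K, |h * pderiv2 0 1 F t (t - h) / F t (t - h) + ρ| < ε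
  condB : ∀ K : Set ℝ, IsCompact K → ∀ ε > 0, ∃ h₀ > 0, ∀ h : ℝ, 0 < h → h < h₀ →
    ∀ t ∈ K, |h * pderiv2 1 0 F (t + h) t / F (t + h) t - ρ| < ε
  condC : ∀ j : ℕ, 2 ≤ j → j ≤ k → ∀ K : Set ℝ, IsCompact K → ∀ ε > 0, ∃ h₀ > 0,
    ∀ h : ℝ, 0 < h → h < h₀ → ∀ t ∈ K,
      |h ^ j * pderiv2 (j - 1) 1 F t (t - h) / F t (t - h)
        + ∏ i ∈ Finset.range j, (ρ - (i : ℝ))| < ε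
  condD : ∀ K : Set ℝ, IsCompact K → ∀ ε > 0, ∃ h₀ > 0, ∀ h : ℝ, 0 < h → h < h₀ →
    ∀ t ∈ K, |h ^ 2 * pderiv2 0 2 F t (t - h) / F t (t - h) - ρ * (ρ - 1)| < ε

/-- The 2-microlocal space with gauge function `F`, `C_F^{d,s'}(t₀)`. -/
def MemCF (F : ℝ → ℝ → ℝ) (d s' t₀ : ℝ) (g : ℝ → ℝ) : Prop :=
  ∃ C > 0, ∃ h > 0, ∃ P : Polynomial ℝ, (P.natDegree : ℤ) ≤ ⌊d - s'⌋ ∧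
    ∀ u v : ℝ, u ∈ Metric.ball t₀ h → v ∈ Metric.ball t₀ h → v ≤ u →
      |(g u - P.eval u) - (g v - P.eval v)| ≤
        C * F u v * (|u - t₀| + |v - t₀|) ^ (-s')

/-- The classical 2-microlocal space `C^{σ,s'}(t₀)`. -/
def MemC2ML (σ s' t₀ : ℝ) (g : ℝ → ℝ) : Prop :=
  ∃ C > 0, ∃ h > 0, ∃ P : Polynomial ℝ, (P.natDegree : ℤ) ≤ ⌊σ - s'⌋ ∧
    ∀ u v : ℝ, u ∈ Metric.ball t₀ h → v ∈ Metric.ball t₀ h →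
      |(g u - P.eval u) - (g v - P.eval v)| ≤
        C * |u - v| ^ σ * (|u - t₀| + |v - t₀|) ^ (-s')

/-- The pointwise Hölder space `C^l(t₀)`. -/
def PtwHolder (l t₀ : ℝ) (g : ℝ → ℝ) : Prop :=
  ∃ C > 0, ∃ h > 0, ∃ P : Polynomial ℝ, (P.natDegree : ℤ) ≤ ⌊l⌋ ∧
    ∀ t ∈ Metric.ball t₀ h, |g t - P.eval t| ≤ C * |t - t₀| ^ l

/-- The pointwise Hölder exponent `h_g(t₀) = sup{l : g ∈ C^l(t₀)}`. -/
def holderExp (g : ℝ → ℝ) (t₀ : ℝ) : ℝ := sSup {l | PtwHolder l t₀ g}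

/-- The Hölder exponent with gauge function `F`,
`h̄^d_g(t₀) = d − inf{s' ≤ 0 : g ∈ C_F^{d,s'}(t₀)}`. -/
def holderGaugeExp (F : ℝ → ℝ → ℝ) (d : ℝ) (g : ℝ → ℝ) (t₀ : ℝ) : ℝ :=
  d - sInf {s' | s' ≤ 0 ∧ MemCF F d s' t₀ g}

/-- The 2-microlocal frontier `σ_{g,t₀}(s') = sup{σ ∈ [0,1) : g ∈ C^{σ,s'}(t₀)}`. -/
def frontier2ML (g : ℝ → ℝ) (t₀ s' : ℝ) : ℝ :=
  sSup {σ | σ ∈ Set.Ico (0:ℝ) 1 ∧ MemC2ML σ s' t₀ g}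

/-- `g` is càdlàg on `[0,∞)`: right-continuous with left limits. -/
def CadlagOn (g : ℝ → ℝ) : Prop :=
  (∀ t : ℝ, 0 ≤ t → Tendsto g (𝓝[Set.Ici t] t) (𝓝 (g t))) ∧
  (∀ t : ℝ, 0 < t → ∃ L : ℝ, Tendsto g (𝓝[Set.Iio t] t) (𝓝 L))


section AuxLemmas

lemma isOpen_Etil : IsOpen Etil :=
  isOpen_lt continuous_snd continuous_fst

lemma diffAt_of_smooth {F : ℝ → ℝ → ℝ}
    (hF : ContDiffOn ℝ 2 (fun p : ℝ × ℝ => F p.1 p.2) Etil) {s r : ℝ} (h : r < s) :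
    DifferentiableAt ℝ (fun p : ℝ × ℝ => F p.1 p.2) (s, r) := by
  have hmem : Etil ∈ nhds ((s, r) : ℝ × ℝ) := isOpen_Etil.mem_nhds h
  exact (hF.contDiffAt hmem).differentiableAt (by norm_num)

lemma hasDerivAt_snd {F : ℝ → ℝ → ℝ}
    (hF : ContDiffOn ℝ 2 (fun p : ℝ × ℝ => F p.1 p.2) Etil) {s r : ℝ} (h : r < s) :
    HasDerivAt (fun r' => F s r') (pderiv2 0 1 F s r) r := by
  have hd : DifferentiableAt ℝ (fun r' => F s r') r := by
    have : DifferentiableAt ℝ (fun p : ℝ × ℝ => F p.1 p.2) (s, r) := diffAt_of_smooth hF h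
    exact this.comp r ((differentiableAt_const s).prodMk differentiableAt_id)
  have : pderiv2 0 1 F s r = deriv (fun r' => F s r') r := by
    simp [pderiv2, iteratedDeriv_succ, iteratedDeriv_zero]
  rw [this]
  exact hd.hasDerivAt

lemma hasDerivAt_fst {F : ℝ → ℝ → ℝ}
    (hF : ContDiffOn ℝ 2 (fun p : ℝ × ℝ => F p.1 p.2) Etil) {s r : ℝ} (h : r < s) :
    HasDerivAt (fun s' => F s' r) (pderiv2 1 0 F s r) s := by
  have hd : DifferentiableAt ℝ (fun s' => F s' r) s := by
    have : DifferentiableAt ℝ (fun p : ℝ × ℝ => F p.1 p.2) (s, r) := diffAt_of_smooth hF h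
    exact this.comp s ((differentiableAt_id (𝕜 := ℝ) (x := s)).prodMk (differentiableAt_const r))
  have : pderiv2 1 0 F s r = deriv (fun s' => F s' r) s := by
    simp [pderiv2, iteratedDeriv_succ, iteratedDeriv_zero]
  rw [this]
  exact hd.hasDerivAt

lemma decay_bound (c h₁ : ℝ) (φ φ' : ℝ → ℝ)
    (hder : ∀ x ∈ Set.Ioc (0:ℝ) h₁, HasDerivAt φ (φ' x) x)
    (hratio : ∀ x ∈ Set.Ioc (0:ℝ) h₁, c * φ x ≤ x * φ' x) :
    ∀ x ∈ Set.Ioc (0:ℝ) h₁, φ x ≤ (φ h₁ * h₁ ^ (-c)) * x ^ c := by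
  intro x hx
  set ψ : ℝ → ℝ := fun y => φ y * y ^ (-c) with hψ
  have key : ψ x ≤ ψ h₁ := by
    rcases eq_or_lt_of_le hx.2 with h | h
    · rw [h]
    have hmono : MonotoneOn ψ (Icc x h₁) := by
      have hder' : ∀ y ∈ Icc x h₁,
          HasDerivAt ψ (φ' y * y ^ (-c) + φ y * (-c * y ^ (-c - 1))) y := by
        intro y hy
        have hy0 : (0:ℝ) < y := lt_of_lt_of_le hx.1 hy.1
        have h1 : HasDerivAt (fun y : ℝ => y ^ (-c)) (-c * y ^ (-c - 1)) y :=
          Real.hasDerivAt_rpow_const (Or.inl hy0.ne')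
        exact (hder y ⟨hy0, hy.2⟩).mul h1
      apply monotoneOn_of_deriv_nonneg (convex_Icc x h₁)
      · exact fun y hy => ((hder' y hy).continuousAt).continuousWithinAt
      · intro y hy
        rw [interior_Icc] at hy
        exact ((hder' y ⟨hy.1.le, hy.2.le⟩).differentiableAt).differentiableWithinAt
      · intro y hy
        rw [interior_Icc] at hy
        have hy0 : (0:ℝ) < y := lt_of_lt_of_le hx.1 hy.1.le
        have hyIoc : y ∈ Set.Ioc (0:ℝ) h₁ := ⟨hy0, hy.2.le⟩
        rw [(hder' y ⟨hy.1.le, hy.2.le⟩).deriv]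
        have hr := hratio y hyIoc
        have hpow : y ^ (-c) = y * y ^ (-c - 1) := by
          rw [Real.rpow_sub hy0, Real.rpow_one]; field_simp
        have hpow1 : (0:ℝ) ≤ y ^ (-c - 1) := Real.rpow_nonneg hy0.le _
        rw [hpow]
        nlinarith [hpow1, hr]
    exact hmono ⟨le_refl x, hx.2⟩ ⟨hx.2, le_refl h₁⟩ hx.2
  have hxpos : (0:ℝ) < x := hx.1
  have hxc : (0:ℝ) < x ^ c := Real.rpow_pos_of_pos hxpos _
  have h6 := mul_le_mul_of_nonneg_right key hxc.le
  simp only [hψ] at h6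
  calc φ x = φ x * x ^ (-c) * x ^ c := by
        rw [mul_assoc, ← Real.rpow_add hxpos]; simp
    _ ≤ φ h₁ * h₁ ^ (-c) * x ^ c := h6

/-- decay of the gauge function near the diagonal, both sides of `t₀` -/
lemma gauge_decay (d : ℝ) (F : ℝ → ℝ → ℝ) (hmem : CPlus 2 F)
    (condA : ∀ K : Set ℝ, IsCompact K → ∀ ε > 0, ∃ h₀ > 0, ∀ h : ℝ, 0 < h → h < h₀ →
      ∀ t ∈ K, |h * pderiv2 0 1 F t (t - h) / F t (t - h) + d| < ε)
    (condB : ∀ K : Set ℝ, IsCompact K → ∀ ε > 0, ∃ h₀ > 0, ∀ h : ℝ, 0 < h → h < h₀ →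
      ∀ t ∈ K, |h * pderiv2 1 0 F (t + h) t / F (t + h) t - d| < ε)
    (t₀ : ℝ) (ε : ℝ) (hε : 0 < ε) :
    ∃ h₁ > 0, ∃ M ≥ 0, ∀ r ∈ Set.Ioc (0:ℝ) h₁,
      F t₀ (t₀ - r) ≤ M * r ^ (d - ε) ∧ F (t₀ + r) t₀ ≤ M * r ^ (d - ε) := by
  obtain ⟨hA, hApos, hAbd⟩ := condA {t₀} isCompact_singleton ε hε
  obtain ⟨hB, hBpos, hBbd⟩ := condB {t₀} isCompact_singleton ε hε
  set h₁ := min hA hB / 2 with hh₁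
  have h₁pos : 0 < h₁ := by positivity
  have h₁A : h₁ < hA :=
    lt_of_lt_of_le (half_lt_self (lt_min hApos hBpos)) (min_le_left _ _)
  have h₁B : h₁ < hB :=
    lt_of_lt_of_le (half_lt_self (lt_min hApos hBpos)) (min_le_right _ _)
  set c := d - ε with hc
  set φ : ℝ → ℝ := fun h => F t₀ (t₀ - h) with hφ
  set φ' : ℝ → ℝ := fun h => -(pderiv2 0 1 F t₀ (t₀ - h)) with hφ'
  have hEt : ∀ x : ℝ, 0 < x → ((t₀, t₀ - x) : ℝ × ℝ) ∈ Etil := by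
    intro x hx; simp only [Etil, Set.mem_setOf_eq]; linarith
  have hEt' : ∀ x : ℝ, 0 < x → ((t₀ + x, t₀) : ℝ × ℝ) ∈ Etil := by
    intro x hx; simp only [Etil, Set.mem_setOf_eq]; linarith
  have hderA : ∀ x ∈ Set.Ioc (0:ℝ) h₁, HasDerivAt φ (φ' x) x := by
    intro x hx
    have hlt : t₀ - x < t₀ := by linarith [hx.1]
    have h1 := hasDerivAt_snd hmem.smooth hlt
    have h2 : HasDerivAt (fun h : ℝ => t₀ - h) (-1) x := by
      simpa using (hasDerivAt_id x).const_sub t₀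
    have h3 := h1.comp x h2
    simpa [hφ, hφ', Function.comp_def, mul_comm] using h3
  have hratioA : ∀ x ∈ Set.Ioc (0:ℝ) h₁, c * φ x ≤ x * φ' x := by
    intro x hx
    have hb := hAbd x hx.1 (lt_of_le_of_lt hx.2 h₁A) t₀ rfl
    have hbp : 0 < F t₀ (t₀ - x) := hmem.pos _ (hEt x hx.1)
    rw [abs_lt] at hb
    have heq : x * pderiv2 0 1 F t₀ (t₀ - x) =
        x * pderiv2 0 1 F t₀ (t₀ - x) / F t₀ (t₀ - x) * F t₀ (t₀ - x) :=
      (div_mul_cancel₀ _ (by exact hbp.ne')).symm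
    have h5 := mul_lt_mul_of_pos_right hb.2 hbp
    show (d - ε) * F t₀ (t₀ - x) ≤ x * -pderiv2 0 1 F t₀ (t₀ - x)
    nlinarith [heq, h5]
  have hAineq := decay_bound c h₁ φ φ' hderA hratioA
  set ψ : ℝ → ℝ := fun h => F (t₀ + h) t₀ with hψ
  set ψ' : ℝ → ℝ := fun h => pderiv2 1 0 F (t₀ + h) t₀ with hψ'
  have hderB : ∀ x ∈ Set.Ioc (0:ℝ) h₁, HasDerivAt ψ (ψ' x) x := by
    intro x hx
    have hlt : t₀ < t₀ + x := by linarith [hx.1]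
    have h1 := hasDerivAt_fst hmem.smooth hlt
    have h2 : HasDerivAt (fun h : ℝ => t₀ + h) 1 x := by
      simpa using (hasDerivAt_id x).const_add t₀
    have h3 := h1.comp x h2
    simpa [hψ, hψ', Function.comp_def] using h3
  have hratioB : ∀ x ∈ Set.Ioc (0:ℝ) h₁, c * ψ x ≤ x * ψ' x := by
    intro x hx
    have hb := hBbd x hx.1 (lt_of_le_of_lt hx.2 h₁B) t₀ rfl
    have hbp : 0 < F (t₀ + x) t₀ := hmem.pos _ (hEt' x hx.1)
    rw [abs_lt] at hb
    have heq : x * pderiv2 1 0 F (t₀ + x) t₀ =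
        x * pderiv2 1 0 F (t₀ + x) t₀ / F (t₀ + x) t₀ * F (t₀ + x) t₀ :=
      (div_mul_cancel₀ _ (by exact hbp.ne')).symm
    have h4 : d - ε < x * pderiv2 1 0 F (t₀ + x) t₀ / F (t₀ + x) t₀ := by linarith [hb.1]
    have h5 := mul_lt_mul_of_pos_right h4 hbp
    show (d - ε) * F (t₀ + x) t₀ ≤ x * pderiv2 1 0 F (t₀ + x) t₀
    nlinarith [heq, h5]
  have hBineq := decay_bound c h₁ ψ ψ' hderB hratioB
  refine ⟨h₁, h₁pos, max (φ h₁ * h₁ ^ (-c)) (ψ h₁ * h₁ ^ (-c)), ?_, ?_⟩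
  · have hp : 0 < φ h₁ := hmem.pos _ (hEt h₁ h₁pos)
    have h2 : (0:ℝ) ≤ φ h₁ * h₁ ^ (-c) := by positivity
    exact le_trans h2 (le_max_left _ _)
  · intro r hr
    have hrc : (0:ℝ) ≤ r ^ c := Real.rpow_nonneg hr.1.le _
    constructor
    · exact le_trans (hAineq r hr)
        (mul_le_mul_of_nonneg_right (le_max_left _ _) hrc)
    · exact le_trans (hBineq r hr)
        (mul_le_mul_of_nonneg_right (le_max_right _ _) hrc)

end AuxLemmas

/-- Theorem 2.1(d): `C_F^{d,s}(t₀) ⊆ C^{d−s−ε}(t₀)` for every `ε ∈ (0,d)`. -/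
theorem microlocal_gauge_subset_holder
    (d : ℝ) (hd : d ∈ Set.Ioo (0:ℝ) 1) (F : ℝ → ℝ → ℝ)
    (hF : SmoothVariation d 2 F) (t₀ : ℝ) (s : ℝ) (hs : s ≤ 0)
    (ε : ℝ) (hε : ε ∈ Set.Ioo (0:ℝ) d)
    (g : ℝ → ℝ) (hg : Continuous g) (hmem : MemCF F d s t₀ g) :
    PtwHolder (d - s - ε) t₀ g := by
  obtain ⟨C, hCpos, h, hhpos, P, hPdeg, hP⟩ := hmem
  obtain ⟨h₁, h₁pos, M, hM, hbd⟩ := gauge_decay d F hF.mem hF.condA hF.condB t₀ ε hε.1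
  set l := d - s - ε with hl
  have hlpos : 0 < l := by simp only [hl]; linarith [hε.2, hs]
  set m : ℕ := (⌊l⌋).toNat with hm
  have hmz : (m : ℤ) = ⌊l⌋ := Int.toNat_of_nonneg (Int.floor_nonneg.mpr hlpos.le)
  set T := Polynomial.taylor t₀ P with hT
  have hTdeg : T.natDegree = P.natDegree := Polynomial.natDegree_taylor P t₀
  have hn : P.natDegree < m + 2 := by
    have h1 : (P.natDegree : ℤ) ≤ ⌊d - s⌋ := hPdeg
    have h2 : d - s ≤ l + 1 := by simp only [hl]; linarith [hε.2, hd.2]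
    have h3 : (⌊d - s⌋ : ℤ) ≤ ⌊l⌋ + 1 := by
      calc ⌊d - s⌋ ≤ ⌊l + 1⌋ := Int.floor_le_floor h2
        _ = ⌊l⌋ + 1 := Int.floor_add_one l
    have h4 : (P.natDegree : ℤ) < (m : ℤ) + 2 := by omega
    exact_mod_cast h4
  set a := T.coeff (m + 1) with ha
  set Q₀ : Polynomial ℝ :=
    ∑ i ∈ Finset.range (m + 1), Polynomial.C (T.coeff i) * (Polynomial.X - Polynomial.C t₀) ^ i
    with hQ₀
  set Q : Polynomial ℝ := Q₀ + Polynomial.C (g t₀ - P.eval t₀) with hQdef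
  have hQ₀deg : Q₀.natDegree ≤ m := by
    apply Polynomial.natDegree_sum_le_of_forall_le
    intro i hi
    calc (Polynomial.C (T.coeff i) * (Polynomial.X - Polynomial.C t₀) ^ i).natDegree
        ≤ (Polynomial.C (T.coeff i)).natDegree
          + ((Polynomial.X - Polynomial.C t₀) ^ i).natDegree := Polynomial.natDegree_mul_le
      _ ≤ 0 + i := by
          simp [Polynomial.natDegree_C, Polynomial.natDegree_pow, Polynomial.natDegree_X_sub_C]
      _ ≤ m := by simpa using Finset.mem_range_succ_iff.mp hi
  have hQdeg : Q.natDegree ≤ m :=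
    le_trans (Polynomial.natDegree_add_le _ _) (by simp [Polynomial.natDegree_C, hQ₀deg])
  have hPeval : ∀ t : ℝ, P.eval t = ∑ i ∈ Finset.range (m + 2), T.coeff i * (t - t₀) ^ i := by
    intro t
    have h1 : P.eval t = T.eval (t - t₀) := by
      rw [hT, Polynomial.taylor_eval]; norm_num
    rw [h1, Polynomial.eval_eq_sum_range' (by rw [hTdeg]; exact hn) (t - t₀)]
  have hQ₀eval : ∀ t : ℝ, Q₀.eval t = ∑ i ∈ Finset.range (m + 1), T.coeff i * (t - t₀) ^ i := by
    intro t; simp [hQ₀, Polynomial.eval_finset_sum]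
  have hdiff : ∀ t : ℝ, P.eval t - Q₀.eval t = a * (t - t₀) ^ (m + 1) := by
    intro t; rw [hPeval t, hQ₀eval t, Finset.sum_range_succ]; ring
  have hQ₀t₀ : Q₀.eval t₀ = P.eval t₀ := by
    have h0 := hdiff t₀; simp at h0; linarith
  set ρ := min (min h h₁) 1 with hρ
  have hρpos : 0 < ρ := lt_min (lt_min hhpos h₁pos) one_pos
  refine ⟨C * M + |a| + 1, by positivity, ρ, hρpos, Q, ?_, ?_⟩
  · rw [← hmz]; exact_mod_cast hQdeg
  · intro t ht
    by_cases hteq : t = t₀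
    · subst hteq
      have hQt : Q.eval t = g t := by
        simp [hQdef, Polynomial.eval_add, Polynomial.eval_C, hQ₀t₀]
      rw [hQt]
      simp only [sub_self, abs_zero]
      positivity
    · set r := |t - t₀| with hr
      have hrpos : 0 < r := abs_pos.mpr (sub_ne_zero.mpr hteq)
      have hrρ : r < ρ := by rwa [Metric.mem_ball, Real.dist_eq] at ht
      have hr1 : r ≤ 1 := le_trans hrρ.le (min_le_right _ _)
      have hrh₁ : r ≤ h₁ := le_trans hrρ.le (le_trans (min_le_left _ _) (min_le_right _ _))
      have hrh : r < h := lt_of_lt_of_le hrρ (le_trans (min_le_left _ _) (min_le_left _ _))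
      have htb : t ∈ Metric.ball t₀ h := by rw [Metric.mem_ball, Real.dist_eq]; exact hrh
      have hinc : |(g t - P.eval t) - (g t₀ - P.eval t₀)|
          ≤ C * (M * r ^ (d - ε)) * r ^ (-s) := by
        have hrsnn : (0:ℝ) ≤ r ^ (-s) := Real.rpow_nonneg hrpos.le _
        rcases lt_or_gt_of_ne hteq with hlt | hgt
        · have h1 := hP t₀ t (mem_ball_self hhpos) htb hlt.le
          have hteqr : t = t₀ - r := by
            rw [hr, abs_of_neg (by linarith : t - t₀ < 0)]; ring
          have h2 : F t₀ t ≤ M * r ^ (d - ε) := by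
            rw [hteqr]; exact (hbd r ⟨hrpos, hrh₁⟩).1
          calc |(g t - P.eval t) - (g t₀ - P.eval t₀)|
              = |(g t₀ - P.eval t₀) - (g t - P.eval t)| := abs_sub_comm _ _
            _ ≤ C * F t₀ t * (|t₀ - t₀| + |t - t₀|) ^ (-s) := h1
            _ = C * F t₀ t * r ^ (-s) := by rw [sub_self, abs_zero, zero_add]
            _ ≤ C * (M * r ^ (d - ε)) * r ^ (-s) :=
                mul_le_mul_of_nonneg_right
                  (mul_le_mul_of_nonneg_left h2 hCpos.le) hrsnn
        · have h1 := hP t t₀ htb (mem_ball_self hhpos) hgt.le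
          have hteqr : t = t₀ + r := by
            rw [hr, abs_of_pos (by linarith : (0:ℝ) < t - t₀)]; ring
          have h2 : F t t₀ ≤ M * r ^ (d - ε) := by
            rw [hteqr]; exact (hbd r ⟨hrpos, hrh₁⟩).2
          calc |(g t - P.eval t) - (g t₀ - P.eval t₀)|
              ≤ C * F t t₀ * (|t - t₀| + |t₀ - t₀|) ^ (-s) := h1
            _ = C * F t t₀ * r ^ (-s) := by rw [sub_self, abs_zero, add_zero]
            _ ≤ C * (M * r ^ (d - ε)) * r ^ (-s) :=
                mul_le_mul_of_nonneg_right
                  (mul_le_mul_of_nonneg_left h2 hCpos.le) hrsnn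
      have htail : |P.eval t - Q₀.eval t| ≤ |a| * r ^ l := by
        rw [hdiff t, abs_mul, abs_pow]
        have hexp : l ≤ ((m + 1 : ℕ) : ℝ) := by
          push_cast
          have h7 : l < (⌊l⌋ : ℝ) + 1 := Int.lt_floor_add_one l
          have h8 : ((m : ℤ) : ℝ) = ((⌊l⌋ : ℤ) : ℝ) := by exact_mod_cast hmz
          push_cast at h8
          linarith
        have h4 : r ^ (((m + 1 : ℕ)) : ℝ) ≤ r ^ l :=
          Real.rpow_le_rpow_of_exponent_ge hrpos hr1 hexp
        calc |a| * |t - t₀| ^ (m + 1) = |a| * r ^ (((m + 1 : ℕ)) : ℝ) := by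
              rw [Real.rpow_natCast]
          _ ≤ |a| * r ^ l := mul_le_mul_of_nonneg_left h4 (abs_nonneg a)
      have hrl : r ^ (d - ε) * r ^ (-s) = r ^ l := by
        rw [← Real.rpow_add hrpos]; congr 1; simp only [hl]; ring
      have hgoal : g t - Q.eval t =
          ((g t - P.eval t) - (g t₀ - P.eval t₀)) + (P.eval t - Q₀.eval t) := by
        simp only [hQdef, Polynomial.eval_add, Polynomial.eval_C]; ring
      have hrlnn : (0:ℝ) ≤ r ^ l := Real.rpow_nonneg hrpos.le _
      calc |g t - Q.eval t|
          ≤ |(g t - P.eval t) - (g t₀ - P.eval t₀)| + |P.eval t - Q₀.eval t| := by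
            rw [hgoal]; exact abs_add_le _ _
        _ ≤ C * (M * r ^ (d - ε)) * r ^ (-s) + |a| * r ^ l := add_le_add hinc htail
        _ = C * M * r ^ l + |a| * r ^ l := by rw [← hrl]; ring
        _ ≤ (C * M + |a| + 1) * r ^ l := by nlinarith [hrlnn]
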